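/- Let X and Y be measurable spaces, k : X × X → ℝ and l : Y × Y → ℝ bounded symmetric measurable kernels, P a probability measure on X × Y, and m ≥ 4. Let W_1,…,W_m with W_i = (x_i, y_i) be i.i.d. with law P. Then the U-statistic ((m−4)!/m!) Σ_{(i,j,q,r)} h(W_i, W_j, W_q, W_r), where the sum ranges over all 4-tuples of pairwise distinct indices in {1,…,m}, has expectation equal to HSIC(k, l; P). -/

import Mathlib

open MeasureTheory ProbabilityTheory

section HSICAux

variable {Z : Type*} [MeasurableSpace Z]

lemma integrable_of_bdd {α : Type*} [MeasurableSpace α] {μ : Measure α} [IsFiniteMeasure μ]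
    {f : α → ℝ} (hf : AEStronglyMeasurable f μ) {C : ℝ} (hC : ∀ a, |f a| ≤ C) :
    Integrable f μ :=
  (integrable_const C).mono' hf (ae_of_all _ (by simpa [Real.norm_eq_abs] using hC))

lemma map_pi_comp {ι κ : Type*} [Fintype ι] [DecidableEq ι] [Fintype κ]
    (P : Measure Z) [IsProbabilityMeasure P] {f : κ → ι} (hf : Function.Injective f) :
    (Measure.pi fun _ : ι => P).map (fun W => W ∘ f) = Measure.pi (fun _ : κ => P) := by
  classical
  have hmeas : Measurable (fun W : ι → Z => W ∘ f) :=
    measurable_pi_lambda _ fun j => measurable_pi_apply (f j)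
  refine (Measure.pi_eq fun s hs => ?_).symm
  rw [Measure.map_apply hmeas (MeasurableSet.univ_pi hs)]
  set s' : ι → Set Z := fun i => if h : ∃ j, f j = i then s h.choose else Set.univ with hs'
  have hsf : ∀ j, s' (f j) = s j := by
    intro j
    have hex : ∃ j', f j' = f j := ⟨j, rfl⟩
    simp only [hs', dif_pos hex]
    exact congrArg s (hf hex.choose_spec)
  have hpre : (fun W : ι → Z => W ∘ f) ⁻¹' Set.pi Set.univ s = Set.pi Set.univ s' := by
    ext W
    simp only [Set.mem_preimage, Set.mem_pi, Set.mem_univ, forall_true_left, Function.comp]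
    constructor
    · intro hW i
      by_cases h : ∃ j, f j = i
      · have h2 := hW h.choose
        rw [h.choose_spec] at h2
        simp only [hs', dif_pos h]
        exact h2
      · simp [hs', dif_neg h]
    · intro hW j
      have h2 := hW (f j)
      rwa [hsf j] at h2
  rw [hpre, Measure.pi_pi]
  calc ∏ i, P (s' i) = ∏ i ∈ Finset.univ.image f, P (s' i) := by
        refine (Finset.prod_subset (Finset.subset_univ _) ?_).symm
        intro i _ hi
        have hni : ¬ ∃ j, f j = i := by simpa [Finset.mem_image] using hi
        simp [hs', dif_neg hni]
    _ = ∏ j, P (s' (f j)) := Finset.prod_image fun a _ b _ hab => hf hab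
    _ = ∏ j, P (s j) := by simp [hsf]

lemma vec4_injective {α : Type*} {a b c d : α} (h1 : a ≠ b) (h2 : a ≠ c) (h3 : a ≠ d)
    (h4 : b ≠ c) (h5 : b ≠ d) (h6 : c ≠ d) : Function.Injective ![a, b, c, d] := by
  intro x y hxy
  fin_cases x <;> fin_cases y <;> simp_all

lemma count_distinct_tuples (m : ℕ) :
    (∑ i : Fin m, ∑ j : Fin m, ∑ q : Fin m, ∑ r : Fin m,
      (if i ≠ j ∧ i ≠ q ∧ i ≠ r ∧ j ≠ q ∧ j ≠ r ∧ q ≠ r then (1:ℝ) else 0))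
      = (m.descFactorial 4 : ℝ) := by
  classical
  have h1 : (∑ i : Fin m, ∑ j : Fin m, ∑ q : Fin m, ∑ r : Fin m,
      (if i ≠ j ∧ i ≠ q ∧ i ≠ r ∧ j ≠ q ∧ j ≠ r ∧ q ≠ r then (1:ℝ) else 0))
      = ∑ p : Fin m × Fin m × Fin m × Fin m,
        (if p.1 ≠ p.2.1 ∧ p.1 ≠ p.2.2.1 ∧ p.1 ≠ p.2.2.2 ∧ p.2.1 ≠ p.2.2.1 ∧ p.2.1 ≠ p.2.2.2
            ∧ p.2.2.1 ≠ p.2.2.2 then (1:ℝ) else 0) := by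
    rw [Fintype.sum_prod_type]
    refine Finset.sum_congr rfl fun i _ => ?_
    rw [Fintype.sum_prod_type]
    refine Finset.sum_congr rfl fun j _ => ?_
    rw [Fintype.sum_prod_type]
  rw [h1, Finset.sum_boole]
  have e : {p : Fin m × Fin m × Fin m × Fin m //
      p.1 ≠ p.2.1 ∧ p.1 ≠ p.2.2.1 ∧ p.1 ≠ p.2.2.2 ∧ p.2.1 ≠ p.2.2.1 ∧ p.2.1 ≠ p.2.2.2
        ∧ p.2.2.1 ≠ p.2.2.2} ≃ (Fin 4 ↪ Fin m) :=
    { toFun := fun p => ⟨![p.1.1, p.1.2.1, p.1.2.2.1, p.1.2.2.2],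
        vec4_injective p.2.1 p.2.2.1 p.2.2.2.1 p.2.2.2.2.1 p.2.2.2.2.2.1 p.2.2.2.2.2.2⟩
      invFun := fun f => ⟨(f 0, f 1, f 2, f 3),
        fun hEq => absurd (f.injective hEq) (by decide),
        fun hEq => absurd (f.injective hEq) (by decide),
        fun hEq => absurd (f.injective hEq) (by decide),
        fun hEq => absurd (f.injective hEq) (by decide),
        fun hEq => absurd (f.injective hEq) (by decide),
        fun hEq => absurd (f.injective hEq) (by decide)⟩
      left_inv := fun p => rfl
      right_inv := fun f => by
        ext a
        fin_cases a <;> rfl }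
  have hcard : (Finset.univ.filter (fun p : Fin m × Fin m × Fin m × Fin m =>
      p.1 ≠ p.2.1 ∧ p.1 ≠ p.2.2.1 ∧ p.1 ≠ p.2.2.2 ∧ p.2.1 ≠ p.2.2.1 ∧ p.2.1 ≠ p.2.2.2
        ∧ p.2.2.1 ≠ p.2.2.2)).card = m.descFactorial 4 := by
    rw [← Fintype.card_subtype, Fintype.card_congr e, Fintype.card_embedding_eq,
      Fintype.card_fin, Fintype.card_fin]
  exact_mod_cast congrArg (Nat.cast : ℕ → ℝ) hcard

lemma map_pi_four (P : Measure Z) [IsProbabilityMeasure P] :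
    (Measure.pi fun _ : Fin 4 => P).map
      (fun w : Fin 4 → Z => (w 0, (w 1, (w 2, w 3)))) = P.prod (P.prod (P.prod P)) := by
  have h1 : (Measure.pi fun _ : Fin 4 => P).map
      (fun w : Fin 4 → Z => (w 0, fun j : Fin 3 => w ((0 : Fin 4).succAbove j)))
      = P.prod (Measure.pi fun _ : Fin 3 => P) :=
    (measurePreserving_piFinSuccAbove (fun _ : Fin 4 => P) 0).map_eq
  have h2 : (Measure.pi fun _ : Fin 3 => P).map
      (fun w : Fin 3 → Z => (w 0, fun j : Fin 2 => w ((0 : Fin 3).succAbove j)))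
      = P.prod (Measure.pi fun _ : Fin 2 => P) :=
    (measurePreserving_piFinSuccAbove (fun _ : Fin 3 => P) 0).map_eq
  have h3 : (Measure.pi fun _ : Fin 2 => P).map (fun w : Fin 2 → Z => (w 0, w 1))
      = P.prod P :=
    (measurePreserving_finTwoArrow P).map_eq
  set f1 : (Fin 4 → Z) → Z × (Fin 3 → Z) :=
    fun w => (w 0, fun j : Fin 3 => w ((0 : Fin 4).succAbove j)) with hf1def
  set f2 : Z × (Fin 3 → Z) → Z × (Z × (Fin 2 → Z)) :=
    Prod.map id (fun w : Fin 3 → Z => (w 0, fun j : Fin 2 => w ((0 : Fin 3).succAbove j))) with hf2def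
  set f3 : Z × (Z × (Fin 2 → Z)) → Z × (Z × (Z × Z)) :=
    Prod.map id (Prod.map id (fun w : Fin 2 → Z => (w 0, w 1))) with hf3def
  have hm1 : Measurable f1 :=
    (measurable_pi_apply _).prodMk (measurable_pi_lambda _ fun j => measurable_pi_apply _)
  have hm2' : Measurable (fun w : Fin 3 → Z => (w 0, fun j : Fin 2 => w ((0 : Fin 3).succAbove j))) :=
    (measurable_pi_apply _).prodMk (measurable_pi_lambda _ fun j => measurable_pi_apply _)
  have hm3' : Measurable (fun w : Fin 2 → Z => (w 0, w 1)) :=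
    (measurable_pi_apply _).prodMk (measurable_pi_apply _)
  have hm2 : Measurable f2 := measurable_id.prodMap hm2'
  have hm3 : Measurable f3 := measurable_id.prodMap (measurable_id.prodMap hm3')
  have hcomp : (fun w : Fin 4 → Z => (w 0, (w 1, (w 2, w 3)))) = f3 ∘ f2 ∘ f1 := by
    funext w
    show _ = (w 0, (w ((0:Fin 4).succAbove 0),
      (w ((0:Fin 4).succAbove ((0:Fin 3).succAbove 0)),
       w ((0:Fin 4).succAbove ((0:Fin 3).succAbove 1)))))
    rfl
  rw [hcomp, ← Function.comp_assoc]
  rw [← Measure.map_map (hm3.comp hm2) hm1, ← Measure.map_map hm3 hm2, h1]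
  rw [hf2def, ← Measure.map_prod_map _ _ measurable_id hm2', Measure.map_id, h2]
  rw [hf3def, ← Measure.map_prod_map _ _ measurable_id (measurable_id.prodMap hm3'),
    Measure.map_id, ← Measure.map_prod_map _ _ measurable_id hm3', Measure.map_id, h3]

/-- The core Fubini computation for the identity-permutation HSIC kernel term over the
fourfold product measure. -/
lemma hsic_core
    {X Y : Type*} [MeasurableSpace X] [MeasurableSpace Y]
    (k : X × X → ℝ) (l : Y × Y → ℝ)
    (hk_meas : Measurable k) (hl_meas : Measurable l)
    (Ck Cl : ℝ) (hCk : ∀ p, |k p| ≤ Ck) (hCl : ∀ p, |l p| ≤ Cl)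
    (P : Measure (X × Y)) [IsProbabilityMeasure P] :
    (∫ w : (X × Y) × ((X × Y) × ((X × Y) × (X × Y))),
        k (w.1.1, w.2.1.1) * (l (w.1.2, w.2.1.2) + l (w.2.2.1.2, w.2.2.2.2)
          - 2 * l (w.1.2, w.2.2.1.2)) ∂(P.prod (P.prod (P.prod P))))
      = (∫ u : (X × Y) × (X × Y), k (u.1.1, u.2.1) * l (u.1.2, u.2.2) ∂(P.prod P))
        + (∫ u : (X × Y) × (X × Y), k (u.1.1, u.2.1) ∂(P.prod P))
          * (∫ u : (X × Y) × (X × Y), l (u.1.2, u.2.2) ∂(P.prod P))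
        - 2 * ∫ w : X × Y,
            (∫ w' : X × Y, k (w.1, w'.1) ∂P) * (∫ w' : X × Y, l (w.2, w'.2) ∂P) ∂P := by
  have hkl : ∀ (p : X × X) (p' : Y × Y), |k p * l p'| ≤ Ck * Cl := fun p p' => by
    rw [abs_mul]
    exact mul_le_mul (hCk p) (hCl p') (abs_nonneg _) ((abs_nonneg _).trans (hCk p))
  -- integrability of the three pieces over the fourfold product
  have hintA : Integrable (fun w : (X × Y) × ((X × Y) × ((X × Y) × (X × Y))) =>
      k (w.1.1, w.2.1.1) * l (w.1.2, w.2.1.2)) (P.prod (P.prod (P.prod P))) :=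
    integrable_of_bdd (Measurable.aestronglyMeasurable (by fun_prop)) fun w => hkl _ _
  have hintB : Integrable (fun w : (X × Y) × ((X × Y) × ((X × Y) × (X × Y))) =>
      k (w.1.1, w.2.1.1) * l (w.2.2.1.2, w.2.2.2.2)) (P.prod (P.prod (P.prod P))) :=
    integrable_of_bdd (Measurable.aestronglyMeasurable (by fun_prop)) fun w => hkl _ _
  have hintC : Integrable (fun w : (X × Y) × ((X × Y) × ((X × Y) × (X × Y))) =>
      k (w.1.1, w.2.1.1) * l (w.1.2, w.2.2.1.2)) (P.prod (P.prod (P.prod P))) :=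
    integrable_of_bdd (Measurable.aestronglyMeasurable (by fun_prop)) fun w => hkl _ _
  have hint2A : Integrable (fun u : (X × Y) × (X × Y) =>
      k (u.1.1, u.2.1) * l (u.1.2, u.2.2)) (P.prod P) :=
    integrable_of_bdd (Measurable.aestronglyMeasurable (by fun_prop)) fun u => hkl _ _
  have hint2K : Integrable (fun u : (X × Y) × (X × Y) => k (u.1.1, u.2.1)) (P.prod P) :=
    integrable_of_bdd (Measurable.aestronglyMeasurable (by fun_prop)) fun u => hCk _
  -- Term A
  have hA : (∫ w : (X × Y) × ((X × Y) × ((X × Y) × (X × Y))),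
      k (w.1.1, w.2.1.1) * l (w.1.2, w.2.1.2) ∂(P.prod (P.prod (P.prod P))))
      = ∫ u : (X × Y) × (X × Y), k (u.1.1, u.2.1) * l (u.1.2, u.2.2) ∂(P.prod P) := by
    calc (∫ w : (X × Y) × ((X × Y) × ((X × Y) × (X × Y))),
        k (w.1.1, w.2.1.1) * l (w.1.2, w.2.1.2) ∂(P.prod (P.prod (P.prod P))))
        = ∫ w1 : X × Y, ∫ v : (X × Y) × ((X × Y) × (X × Y)),
            k (w1.1, v.1.1) * l (w1.2, v.1.2) ∂(P.prod (P.prod P)) ∂P := integral_prod _ hintA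
      _ = ∫ w1 : X × Y, ∫ w2 : X × Y, k (w1.1, w2.1) * l (w1.2, w2.2) ∂P ∂P := by
          refine integral_congr_ae (ae_of_all _ fun w1 => ?_)
          calc (∫ v : (X × Y) × ((X × Y) × (X × Y)),
              k (w1.1, v.1.1) * l (w1.2, v.1.2) ∂(P.prod (P.prod P)))
              = ∫ w2 : X × Y, ∫ u : (X × Y) × (X × Y),
                  k (w1.1, w2.1) * l (w1.2, w2.2) ∂(P.prod P) ∂P :=
                integral_prod _ (integrable_of_bdd
                  (Measurable.aestronglyMeasurable (by fun_prop)) fun v => hkl _ _)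
            _ = ∫ w2 : X × Y, k (w1.1, w2.1) * l (w1.2, w2.2) ∂P := by
                refine integral_congr_ae (ae_of_all _ fun w2 => ?_)
                simp
      _ = ∫ u : (X × Y) × (X × Y), k (u.1.1, u.2.1) * l (u.1.2, u.2.2) ∂(P.prod P) :=
          (integral_prod _ hint2A).symm
  -- Term B
  have hB : (∫ w : (X × Y) × ((X × Y) × ((X × Y) × (X × Y))),
      k (w.1.1, w.2.1.1) * l (w.2.2.1.2, w.2.2.2.2) ∂(P.prod (P.prod (P.prod P))))
      = (∫ u : (X × Y) × (X × Y), k (u.1.1, u.2.1) ∂(P.prod P))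
        * (∫ u : (X × Y) × (X × Y), l (u.1.2, u.2.2) ∂(P.prod P)) := by
    calc (∫ w : (X × Y) × ((X × Y) × ((X × Y) × (X × Y))),
        k (w.1.1, w.2.1.1) * l (w.2.2.1.2, w.2.2.2.2) ∂(P.prod (P.prod (P.prod P))))
        = ∫ w1 : X × Y, ∫ v : (X × Y) × ((X × Y) × (X × Y)),
            k (w1.1, v.1.1) * l (v.2.1.2, v.2.2.2) ∂(P.prod (P.prod P)) ∂P := integral_prod _ hintB
      _ = ∫ w1 : X × Y, ∫ w2 : X × Y, k (w1.1, w2.1)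
            * (∫ u : (X × Y) × (X × Y), l (u.1.2, u.2.2) ∂(P.prod P)) ∂P ∂P := by
          refine integral_congr_ae (ae_of_all _ fun w1 => ?_)
          calc (∫ v : (X × Y) × ((X × Y) × (X × Y)),
              k (w1.1, v.1.1) * l (v.2.1.2, v.2.2.2) ∂(P.prod (P.prod P)))
              = ∫ w2 : X × Y, ∫ u : (X × Y) × (X × Y),
                  k (w1.1, w2.1) * l (u.1.2, u.2.2) ∂(P.prod P) ∂P :=
                integral_prod _ (integrable_of_bdd
                  (Measurable.aestronglyMeasurable (by fun_prop)) fun v => hkl _ _)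
            _ = ∫ w2 : X × Y, k (w1.1, w2.1)
                  * (∫ u : (X × Y) × (X × Y), l (u.1.2, u.2.2) ∂(P.prod P)) ∂P :=
                integral_congr_ae (ae_of_all _ fun w2 => integral_const_mul _ _)
      _ = (∫ w1 : X × Y, ∫ w2 : X × Y, k (w1.1, w2.1) ∂P ∂P)
            * (∫ u : (X × Y) × (X × Y), l (u.1.2, u.2.2) ∂(P.prod P)) := by
          calc (∫ w1 : X × Y, ∫ w2 : X × Y, k (w1.1, w2.1)
                * (∫ u : (X × Y) × (X × Y), l (u.1.2, u.2.2) ∂(P.prod P)) ∂P ∂P)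
              = ∫ w1 : X × Y, (∫ w2 : X × Y, k (w1.1, w2.1) ∂P)
                  * (∫ u : (X × Y) × (X × Y), l (u.1.2, u.2.2) ∂(P.prod P)) ∂P :=
                integral_congr_ae (ae_of_all _ fun w1 => integral_mul_const _ _)
            _ = _ := integral_mul_const _ _
      _ = (∫ u : (X × Y) × (X × Y), k (u.1.1, u.2.1) ∂(P.prod P))
            * (∫ u : (X × Y) × (X × Y), l (u.1.2, u.2.2) ∂(P.prod P)) := by
          congr 1
          exact (integral_prod _ hint2K).symm
  -- Term C
  have hC : (∫ w : (X × Y) × ((X × Y) × ((X × Y) × (X × Y))),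
      k (w.1.1, w.2.1.1) * l (w.1.2, w.2.2.1.2) ∂(P.prod (P.prod (P.prod P))))
      = ∫ w : X × Y, (∫ w' : X × Y, k (w.1, w'.1) ∂P)
          * (∫ w' : X × Y, l (w.2, w'.2) ∂P) ∂P := by
    calc (∫ w : (X × Y) × ((X × Y) × ((X × Y) × (X × Y))),
        k (w.1.1, w.2.1.1) * l (w.1.2, w.2.2.1.2) ∂(P.prod (P.prod (P.prod P))))
        = ∫ w1 : X × Y, ∫ v : (X × Y) × ((X × Y) × (X × Y)),
            k (w1.1, v.1.1) * l (w1.2, v.2.1.2) ∂(P.prod (P.prod P)) ∂P := integral_prod _ hintC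
      _ = ∫ w1 : X × Y, (∫ w' : X × Y, k (w1.1, w'.1) ∂P)
            * (∫ w' : X × Y, l (w1.2, w'.2) ∂P) ∂P := by
          refine integral_congr_ae (ae_of_all _ fun w1 => ?_)
          calc (∫ v : (X × Y) × ((X × Y) × (X × Y)),
              k (w1.1, v.1.1) * l (w1.2, v.2.1.2) ∂(P.prod (P.prod P)))
              = ∫ w2 : X × Y, ∫ u : (X × Y) × (X × Y),
                  k (w1.1, w2.1) * l (w1.2, u.1.2) ∂(P.prod P) ∂P :=
                integral_prod _ (integrable_of_bdd
                  (Measurable.aestronglyMeasurable (by fun_prop)) fun v => hkl _ _)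
            _ = ∫ w2 : X × Y, k (w1.1, w2.1)
                  * (∫ u : (X × Y) × (X × Y), l (w1.2, u.1.2) ∂(P.prod P)) ∂P :=
                integral_congr_ae (ae_of_all _ fun w2 => integral_const_mul _ _)
            _ = ∫ w2 : X × Y, k (w1.1, w2.1) * (∫ w' : X × Y, l (w1.2, w'.2) ∂P) ∂P := by
                refine integral_congr_ae (ae_of_all _ fun w2 => ?_)
                show k (w1.1, w2.1) * (∫ u : (X × Y) × (X × Y), l (w1.2, u.1.2) ∂(P.prod P))
                  = k (w1.1, w2.1) * (∫ w' : X × Y, l (w1.2, w'.2) ∂P)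
                congr 1
                calc (∫ u : (X × Y) × (X × Y), l (w1.2, u.1.2) ∂(P.prod P))
                    = ∫ w3 : X × Y, ∫ w4 : X × Y, l (w1.2, w3.2) ∂P ∂P :=
                      integral_prod _ (integrable_of_bdd
                        (Measurable.aestronglyMeasurable (by fun_prop)) fun u => hCl _)
                  _ = ∫ w3 : X × Y, l (w1.2, w3.2) ∂P := by
                      refine integral_congr_ae (ae_of_all _ fun w3 => ?_)
                      simp
            _ = (∫ w' : X × Y, k (w1.1, w'.1) ∂P) * (∫ w' : X × Y, l (w1.2, w'.2) ∂P) :=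
                integral_mul_const _ _
  -- split the integral
  calc (∫ w : (X × Y) × ((X × Y) × ((X × Y) × (X × Y))),
      k (w.1.1, w.2.1.1) * (l (w.1.2, w.2.1.2) + l (w.2.2.1.2, w.2.2.2.2)
        - 2 * l (w.1.2, w.2.2.1.2)) ∂(P.prod (P.prod (P.prod P))))
      = ∫ w : (X × Y) × ((X × Y) × ((X × Y) × (X × Y))),
          (k (w.1.1, w.2.1.1) * l (w.1.2, w.2.1.2)
            + k (w.1.1, w.2.1.1) * l (w.2.2.1.2, w.2.2.2.2)
            - 2 * (k (w.1.1, w.2.1.1) * l (w.1.2, w.2.2.1.2))) ∂(P.prod (P.prod (P.prod P))) :=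
        integral_congr_ae (ae_of_all _ fun w => by ring)
    _ = (∫ w : (X × Y) × ((X × Y) × ((X × Y) × (X × Y))),
          (k (w.1.1, w.2.1.1) * l (w.1.2, w.2.1.2)
            + k (w.1.1, w.2.1.1) * l (w.2.2.1.2, w.2.2.2.2)) ∂(P.prod (P.prod (P.prod P))))
        - ∫ w : (X × Y) × ((X × Y) × ((X × Y) × (X × Y))),
            2 * (k (w.1.1, w.2.1.1) * l (w.1.2, w.2.2.1.2)) ∂(P.prod (P.prod (P.prod P))) :=
        integral_sub (hintA.add hintB) (hintC.const_mul 2)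
    _ = (∫ u : (X × Y) × (X × Y), k (u.1.1, u.2.1) * l (u.1.2, u.2.2) ∂(P.prod P))
        + (∫ u : (X × Y) × (X × Y), k (u.1.1, u.2.1) ∂(P.prod P))
          * (∫ u : (X × Y) × (X × Y), l (u.1.2, u.2.2) ∂(P.prod P))
        - 2 * ∫ w : X × Y,
            (∫ w' : X × Y, k (w.1, w'.1) ∂P) * (∫ w' : X × Y, l (w.2, w'.2) ∂P) ∂P := by
        rw [integral_add hintA hintB, integral_const_mul, hA, hB, hC]

end HSICAux

/-- **Unbiasedness of the HSIC order-4 U-statistic** (Theorem 2.3, Eqs. 12–13).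
With `W_i = (x_i, y_i)` i.i.d. with law `P` on `X × Y`, the U-statistic
`((m−4)!/m!) Σ_{(i,j,q,r) pairwise distinct} h(W_i, W_j, W_q, W_r)`, where `h` is the
order-4 HSIC kernel, has expectation `HSIC(k, l; P)`. -/
theorem stmt_4
    {X Y : Type*} [MeasurableSpace X] [MeasurableSpace Y]
    (k : X × X → ℝ) (l : Y × Y → ℝ)
    (hk_meas : Measurable k) (hl_meas : Measurable l)
    (hk_bdd : ∃ C : ℝ, ∀ p, |k p| ≤ C) (hl_bdd : ∃ C : ℝ, ∀ p, |l p| ≤ C)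
    (hk_symm : ∀ a b : X, k (a, b) = k (b, a)) (hl_symm : ∀ a b : Y, l (a, b) = l (b, a))
    (P : Measure (X × Y)) [IsProbabilityMeasure P]
    (Px : Measure X) (Py : Measure Y)
    (hPx : Px = P.map Prod.fst) (hPy : Py = P.map Prod.snd)
    (HSIC : ℝ)
    (hHSIC : HSIC =
      (∫ w : (X × Y) × (X × Y), k (w.1.1, w.2.1) * l (w.1.2, w.2.2) ∂(P.prod P))
      + (∫ p, k p ∂(Px.prod Px)) * (∫ p, l p ∂(Py.prod Py))
      - 2 * ∫ w : X × Y, (∫ x', k (w.1, x') ∂Px) * (∫ y', l (w.2, y') ∂Py) ∂P)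
    (h : (Fin 4 → X × Y) → ℝ)
    (hh : ∀ w : Fin 4 → X × Y,
      h w = (1 / 24) * ∑ σ : Equiv.Perm (Fin 4),
        k ((w (σ 0)).1, (w (σ 1)).1) *
          (l ((w (σ 0)).2, (w (σ 1)).2) + l ((w (σ 2)).2, (w (σ 3)).2)
            - 2 * l ((w (σ 0)).2, (w (σ 2)).2)))
    (m : ℕ) (hm : 4 ≤ m) :
    (∫ W : Fin m → X × Y,
        ((Nat.factorial (m - 4) : ℝ) / (Nat.factorial m : ℝ)) *
          ∑ i, ∑ j, ∑ q, ∑ r,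
            (if i ≠ j ∧ i ≠ q ∧ i ≠ r ∧ j ≠ q ∧ j ≠ r ∧ q ≠ r
              then h ![W i, W j, W q, W r] else 0)
      ∂(Measure.pi fun _ : Fin m => P))
      = HSIC := by
  obtain ⟨Ck0, hCk0⟩ := hk_bdd
  obtain ⟨Cl0, hCl0⟩ := hl_bdd
  have hCk : ∀ p, |k p| ≤ |Ck0| := fun p => (hCk0 p).trans (le_abs_self _)
  have hCl : ∀ p, |l p| ≤ |Cl0| := fun p => (hCl0 p).trans (le_abs_self _)
  have hprod : ∀ a b c d : X × Y,
      |k (a.1, b.1) * (l (a.2, b.2) + l (c.2, d.2) - 2 * l (a.2, c.2))|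
        ≤ |Ck0| * (4 * |Cl0|) := by
    intro a b c d
    rw [abs_mul]
    refine mul_le_mul (hCk _) ?_ (abs_nonneg _) (abs_nonneg _)
    have h1 := abs_le.mp (hCl (a.2, b.2))
    have h2 := abs_le.mp (hCl (c.2, d.2))
    have h3 := abs_le.mp (hCl (a.2, c.2))
    rw [abs_le]
    constructor <;> [linarith; linarith]
  have hmeas_h : Measurable h := by
    have hfun : h = fun w : Fin 4 → X × Y => (1 / 24 : ℝ) * ∑ σ : Equiv.Perm (Fin 4),
        k ((w (σ 0)).1, (w (σ 1)).1) *
          (l ((w (σ 0)).2, (w (σ 1)).2) + l ((w (σ 2)).2, (w (σ 3)).2)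
            - 2 * l ((w (σ 0)).2, (w (σ 2)).2)) := funext hh
    rw [hfun]
    exact Measurable.const_mul (Finset.measurable_sum _ fun σ _ => by fun_prop) _
  have hbdd_h : ∀ w, |h w| ≤ |Ck0| * (4 * |Cl0|) := by
    intro w
    rw [hh w, abs_mul]
    have h1 : |(1 / 24 : ℝ)| = 1 / 24 := by norm_num
    rw [h1]
    have h2 := Finset.abs_sum_le_sum_abs
      (fun σ : Equiv.Perm (Fin 4) => k ((w (σ 0)).1, (w (σ 1)).1) *
        (l ((w (σ 0)).2, (w (σ 1)).2) + l ((w (σ 2)).2, (w (σ 3)).2)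
          - 2 * l ((w (σ 0)).2, (w (σ 2)).2))) Finset.univ
    have h3 : (∑ σ : Equiv.Perm (Fin 4), |k ((w (σ 0)).1, (w (σ 1)).1) *
        (l ((w (σ 0)).2, (w (σ 1)).2) + l ((w (σ 2)).2, (w (σ 3)).2)
          - 2 * l ((w (σ 0)).2, (w (σ 2)).2))|)
        ≤ ∑ _σ : Equiv.Perm (Fin 4), (|Ck0| * (4 * |Cl0|)) :=
      Finset.sum_le_sum fun σ _ => hprod _ _ _ _
    have h4 : (∑ _σ : Equiv.Perm (Fin 4), (|Ck0| * (4 * |Cl0|)))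
        = 24 * (|Ck0| * (4 * |Cl0|)) := by
      rw [Finset.sum_const, Finset.card_univ, Fintype.card_perm, Fintype.card_fin,
        nsmul_eq_mul]
      norm_num [Nat.factorial]
    linarith
  have int_h : Integrable h (Measure.pi fun _ : Fin 4 => P) :=
    integrable_of_bdd hmeas_h.aestronglyMeasurable hbdd_h
  -- reduction of each distinct tuple to the canonical 4-fold pi measure
  have htuple : ∀ i j q r : Fin m, (i ≠ j ∧ i ≠ q ∧ i ≠ r ∧ j ≠ q ∧ j ≠ r ∧ q ≠ r) →
      (∫ W : Fin m → X × Y, h ![W i, W j, W q, W r] ∂(Measure.pi fun _ : Fin m => P))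
        = ∫ w, h w ∂(Measure.pi fun _ : Fin 4 => P) := by
    intro i j q r hc
    have hinj : Function.Injective ![i, j, q, r] :=
      vec4_injective hc.1 hc.2.1 hc.2.2.1 hc.2.2.2.1 hc.2.2.2.2.1 hc.2.2.2.2.2
    have hcomp : ∀ W : Fin m → X × Y, ![W i, W j, W q, W r] = W ∘ ![i, j, q, r] := by
      intro W; funext a; fin_cases a <;> rfl
    have hcm : Measurable (fun W : Fin m → X × Y => W ∘ ![i, j, q, r]) :=
      measurable_pi_lambda _ fun a => measurable_pi_apply _
    calc (∫ W : Fin m → X × Y, h ![W i, W j, W q, W r] ∂(Measure.pi fun _ : Fin m => P))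
        = ∫ W : Fin m → X × Y, h (W ∘ ![i, j, q, r]) ∂(Measure.pi fun _ : Fin m => P) :=
          integral_congr_ae (ae_of_all _ fun W => congrArg h (hcomp W))
      _ = ∫ w, h w ∂((Measure.pi fun _ : Fin m => P).map (fun W => W ∘ ![i, j, q, r])) :=
          (integral_map hcm.aemeasurable hmeas_h.aestronglyMeasurable).symm
      _ = ∫ w, h w ∂(Measure.pi fun _ : Fin 4 => P) := by rw [map_pi_comp P hinj]
  have hint_tuple : ∀ i j q r : Fin m, Integrable (fun W : Fin m → X × Y =>
      if i ≠ j ∧ i ≠ q ∧ i ≠ r ∧ j ≠ q ∧ j ≠ r ∧ q ≠ r then h ![W i, W j, W q, W r] else 0)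
      (Measure.pi fun _ : Fin m => P) := by
    intro i j q r
    by_cases hc : i ≠ j ∧ i ≠ q ∧ i ≠ r ∧ j ≠ q ∧ j ≠ r ∧ q ≠ r
    · simp only [if_pos hc]
      refine integrable_of_bdd (Measurable.aestronglyMeasurable ?_) (fun W => hbdd_h _)
      refine hmeas_h.comp (measurable_pi_lambda _ fun a => ?_)
      fin_cases a
      · exact measurable_pi_apply i
      · exact measurable_pi_apply j
      · exact measurable_pi_apply q
      · exact measurable_pi_apply r
    · simp only [if_neg hc]
      exact integrable_const 0
  have heval : ∀ i j q r : Fin m,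
      (∫ W : Fin m → X × Y,
          (if i ≠ j ∧ i ≠ q ∧ i ≠ r ∧ j ≠ q ∧ j ≠ r ∧ q ≠ r
            then h ![W i, W j, W q, W r] else 0) ∂(Measure.pi fun _ : Fin m => P))
        = (if i ≠ j ∧ i ≠ q ∧ i ≠ r ∧ j ≠ q ∧ j ≠ r ∧ q ≠ r then (1:ℝ) else 0)
            * ∫ w, h w ∂(Measure.pi fun _ : Fin 4 => P) := by
    intro i j q r
    by_cases hc : i ≠ j ∧ i ≠ q ∧ i ≠ r ∧ j ≠ q ∧ j ≠ r ∧ q ≠ r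
    · simp only [if_pos hc, one_mul]
      exact htuple i j q r hc
    · simp only [if_neg hc, zero_mul, integral_zero]
  have hint3 : ∀ i j q : Fin m, Integrable (fun W : Fin m → X × Y =>
      ∑ r, if i ≠ j ∧ i ≠ q ∧ i ≠ r ∧ j ≠ q ∧ j ≠ r ∧ q ≠ r
        then h ![W i, W j, W q, W r] else 0) (Measure.pi fun _ : Fin m => P) :=
    fun i j q => integrable_finset_sum _ fun r _ => hint_tuple i j q r
  have hint2 : ∀ i j : Fin m, Integrable (fun W : Fin m → X × Y =>
      ∑ q, ∑ r, if i ≠ j ∧ i ≠ q ∧ i ≠ r ∧ j ≠ q ∧ j ≠ r ∧ q ≠ r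
        then h ![W i, W j, W q, W r] else 0) (Measure.pi fun _ : Fin m => P) :=
    fun i j => integrable_finset_sum _ fun q _ => hint3 i j q
  have hint1 : ∀ i : Fin m, Integrable (fun W : Fin m → X × Y =>
      ∑ j, ∑ q, ∑ r, if i ≠ j ∧ i ≠ q ∧ i ≠ r ∧ j ≠ q ∧ j ≠ r ∧ q ≠ r
        then h ![W i, W j, W q, W r] else 0) (Measure.pi fun _ : Fin m => P) :=
    fun i => integrable_finset_sum _ fun j _ => hint2 i j
  rw [integral_const_mul]
  have hswap : (∫ W : Fin m → X × Y,
      (∑ i, ∑ j, ∑ q, ∑ r, if i ≠ j ∧ i ≠ q ∧ i ≠ r ∧ j ≠ q ∧ j ≠ r ∧ q ≠ r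
        then h ![W i, W j, W q, W r] else 0) ∂(Measure.pi fun _ : Fin m => P))
      = ∑ i, ∑ j, ∑ q, ∑ r, ∫ W : Fin m → X × Y,
          (if i ≠ j ∧ i ≠ q ∧ i ≠ r ∧ j ≠ q ∧ j ≠ r ∧ q ≠ r
            then h ![W i, W j, W q, W r] else 0) ∂(Measure.pi fun _ : Fin m => P) := by
    rw [integral_finset_sum _ fun i _ => hint1 i]
    refine Finset.sum_congr rfl fun i _ => ?_
    rw [integral_finset_sum _ fun j _ => hint2 i j]
    refine Finset.sum_congr rfl fun j _ => ?_
    rw [integral_finset_sum _ fun q _ => hint3 i j q]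
    refine Finset.sum_congr rfl fun q _ => ?_
    rw [integral_finset_sum _ fun r _ => hint_tuple i j q r]
  rw [hswap]
  have hsum_eval : (∑ i, ∑ j, ∑ q, ∑ r, ∫ W : Fin m → X × Y,
      (if i ≠ j ∧ i ≠ q ∧ i ≠ r ∧ j ≠ q ∧ j ≠ r ∧ q ≠ r
        then h ![W i, W j, W q, W r] else 0) ∂(Measure.pi fun _ : Fin m => P))
      = (m.descFactorial 4 : ℝ) * ∫ w, h w ∂(Measure.pi fun _ : Fin 4 => P) := by
    calc (∑ i, ∑ j, ∑ q, ∑ r, ∫ W : Fin m → X × Y,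
        (if i ≠ j ∧ i ≠ q ∧ i ≠ r ∧ j ≠ q ∧ j ≠ r ∧ q ≠ r
          then h ![W i, W j, W q, W r] else 0) ∂(Measure.pi fun _ : Fin m => P))
        = ∑ i, ∑ j, ∑ q, ∑ r,
            (if i ≠ j ∧ i ≠ q ∧ i ≠ r ∧ j ≠ q ∧ j ≠ r ∧ q ≠ r then (1:ℝ) else 0)
              * ∫ w, h w ∂(Measure.pi fun _ : Fin 4 => P) :=
          Finset.sum_congr rfl fun i _ => Finset.sum_congr rfl fun j _ =>
            Finset.sum_congr rfl fun q _ => Finset.sum_congr rfl fun r _ => heval i j q r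
      _ = (∑ i : Fin m, ∑ j : Fin m, ∑ q : Fin m, ∑ r : Fin m,
            (if i ≠ j ∧ i ≠ q ∧ i ≠ r ∧ j ≠ q ∧ j ≠ r ∧ q ≠ r then (1:ℝ) else 0))
              * ∫ w, h w ∂(Measure.pi fun _ : Fin 4 => P) := by
          simp_rw [← Finset.sum_mul]
      _ = (m.descFactorial 4 : ℝ) * ∫ w, h w ∂(Measure.pi fun _ : Fin 4 => P) := by
          rw [count_distinct_tuples m]
  rw [hsum_eval]
  have hfact : ((m - 4).factorial : ℝ) / (m.factorial : ℝ) * (m.descFactorial 4 : ℝ) = 1 := by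
    have hne : (m.factorial : ℝ) ≠ 0 := Nat.cast_ne_zero.mpr m.factorial_ne_zero
    have hmd : ((m - 4).factorial : ℝ) * (m.descFactorial 4 : ℝ) = (m.factorial : ℝ) := by
      exact_mod_cast congrArg (Nat.cast : ℕ → ℝ) (Nat.factorial_mul_descFactorial hm)
    rw [div_mul_eq_mul_div, hmd, div_self hne]
  rw [← mul_assoc, hfact, one_mul]
  -- now it remains to show `∫ h ∂P⁴ = HSIC`
  have hIperm : ∀ σ : Equiv.Perm (Fin 4),
      (∫ w : Fin 4 → X × Y, k ((w (σ 0)).1, (w (σ 1)).1) *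
          (l ((w (σ 0)).2, (w (σ 1)).2) + l ((w (σ 2)).2, (w (σ 3)).2)
            - 2 * l ((w (σ 0)).2, (w (σ 2)).2)) ∂(Measure.pi fun _ : Fin 4 => P))
        = ∫ w : Fin 4 → X × Y, k ((w 0).1, (w 1).1) *
            (l ((w 0).2, (w 1).2) + l ((w 2).2, (w 3).2)
              - 2 * l ((w 0).2, (w 2).2)) ∂(Measure.pi fun _ : Fin 4 => P) := by
    intro σ
    have hGmeas : Measurable (fun w : Fin 4 → X × Y => k ((w 0).1, (w 1).1) *
        (l ((w 0).2, (w 1).2) + l ((w 2).2, (w 3).2) - 2 * l ((w 0).2, (w 2).2))) := by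
      fun_prop
    have hcm : Measurable (fun W : Fin 4 → X × Y => W ∘ ⇑σ) :=
      measurable_pi_lambda _ fun a => measurable_pi_apply _
    conv_rhs => rw [← map_pi_comp P σ.injective]
    rw [integral_map hcm.aemeasurable hGmeas.aestronglyMeasurable]
    rfl
  have hIsum : (∫ w, h w ∂(Measure.pi fun _ : Fin 4 => P))
      = ∫ w : Fin 4 → X × Y, k ((w 0).1, (w 1).1) *
          (l ((w 0).2, (w 1).2) + l ((w 2).2, (w 3).2)
            - 2 * l ((w 0).2, (w 2).2)) ∂(Measure.pi fun _ : Fin 4 => P) := by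
    calc (∫ w, h w ∂(Measure.pi fun _ : Fin 4 => P))
        = ∫ w : Fin 4 → X × Y, ((1 / 24 : ℝ) * ∑ σ : Equiv.Perm (Fin 4),
            k ((w (σ 0)).1, (w (σ 1)).1) *
              (l ((w (σ 0)).2, (w (σ 1)).2) + l ((w (σ 2)).2, (w (σ 3)).2)
                - 2 * l ((w (σ 0)).2, (w (σ 2)).2))) ∂(Measure.pi fun _ : Fin 4 => P) :=
          integral_congr_ae (ae_of_all _ hh)
      _ = (1 / 24 : ℝ) * ∑ σ : Equiv.Perm (Fin 4), ∫ w : Fin 4 → X × Y,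
            k ((w (σ 0)).1, (w (σ 1)).1) *
              (l ((w (σ 0)).2, (w (σ 1)).2) + l ((w (σ 2)).2, (w (σ 3)).2)
                - 2 * l ((w (σ 0)).2, (w (σ 2)).2)) ∂(Measure.pi fun _ : Fin 4 => P) := by
          rw [integral_const_mul, integral_finset_sum _ fun σ _ =>
            integrable_of_bdd (Measurable.aestronglyMeasurable (by fun_prop))
              (fun w => hprod (w (σ 0)) (w (σ 1)) (w (σ 2)) (w (σ 3)))]
      _ = (1 / 24 : ℝ) * ∑ _σ : Equiv.Perm (Fin 4), ∫ w : Fin 4 → X × Y,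
            k ((w 0).1, (w 1).1) * (l ((w 0).2, (w 1).2) + l ((w 2).2, (w 3).2)
              - 2 * l ((w 0).2, (w 2).2)) ∂(Measure.pi fun _ : Fin 4 => P) := by
          rw [Finset.sum_congr rfl fun σ _ => hIperm σ]
      _ = ∫ w : Fin 4 → X × Y, k ((w 0).1, (w 1).1) *
            (l ((w 0).2, (w 1).2) + l ((w 2).2, (w 3).2)
              - 2 * l ((w 0).2, (w 2).2)) ∂(Measure.pi fun _ : Fin 4 => P) := by
          rw [Finset.sum_const, Finset.card_univ, Fintype.card_perm, Fintype.card_fin,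
            nsmul_eq_mul]
          push_cast [Nat.factorial]
          ring
  rw [hIsum]
  have htup4 : Measurable (fun w : Fin 4 → X × Y => (w 0, (w 1, (w 2, w 3)))) :=
    (measurable_pi_apply _).prodMk ((measurable_pi_apply _).prodMk
      ((measurable_pi_apply _).prodMk (measurable_pi_apply _)))
  have hFmeas : Measurable (fun w : (X × Y) × ((X × Y) × ((X × Y) × (X × Y))) =>
      k (w.1.1, w.2.1.1) * (l (w.1.2, w.2.1.2) + l (w.2.2.1.2, w.2.2.2.2)
        - 2 * l (w.1.2, w.2.2.1.2))) := by fun_prop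
  have htrans : (∫ w : Fin 4 → X × Y, k ((w 0).1, (w 1).1) *
        (l ((w 0).2, (w 1).2) + l ((w 2).2, (w 3).2)
          - 2 * l ((w 0).2, (w 2).2)) ∂(Measure.pi fun _ : Fin 4 => P))
      = ∫ w : (X × Y) × ((X × Y) × ((X × Y) × (X × Y))),
          k (w.1.1, w.2.1.1) * (l (w.1.2, w.2.1.2) + l (w.2.2.1.2, w.2.2.2.2)
            - 2 * l (w.1.2, w.2.2.1.2)) ∂(P.prod (P.prod (P.prod P))) := by
    conv_rhs => rw [← map_pi_four P]
    rw [integral_map htup4.aemeasurable hFmeas.aestronglyMeasurable]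
  rw [htrans, hsic_core k l hk_meas hl_meas _ _ hCk hCl P, hHSIC]
  have hKxx : (∫ u : (X × Y) × (X × Y), k (u.1.1, u.2.1) ∂(P.prod P))
      = ∫ p, k p ∂(Px.prod Px) := by
    rw [hPx, Measure.map_prod_map _ _ measurable_fst measurable_fst,
      integral_map (measurable_fst.prodMap measurable_fst).aemeasurable
        hk_meas.aestronglyMeasurable]
    rfl
  have hLyy : (∫ u : (X × Y) × (X × Y), l (u.1.2, u.2.2) ∂(P.prod P))
      = ∫ p, l p ∂(Py.prod Py) := by
    rw [hPy, Measure.map_prod_map _ _ measurable_snd measurable_snd,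
      integral_map (measurable_snd.prodMap measurable_snd).aemeasurable
        hl_meas.aestronglyMeasurable]
    rfl
  have hKx : ∀ x : X, (∫ w' : X × Y, k (x, w'.1) ∂P) = ∫ x', k (x, x') ∂Px := by
    intro x
    rw [hPx]
    exact (integral_map measurable_fst.aemeasurable
      ((hk_meas.comp measurable_prodMk_left).aestronglyMeasurable)).symm
  have hLy : ∀ y : Y, (∫ w' : X × Y, l (y, w'.2) ∂P) = ∫ y', l (y, y') ∂Py := by
    intro y
    rw [hPy]
    exact (integral_map measurable_snd.aemeasurable
      ((hl_meas.comp measurable_prodMk_left).aestronglyMeasurable)).symm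
  have hfinal3 : (∫ w : X × Y,
      (∫ w' : X × Y, k (w.1, w'.1) ∂P) * (∫ w' : X × Y, l (w.2, w'.2) ∂P) ∂P)
      = ∫ w : X × Y, (∫ x', k (w.1, x') ∂Px) * (∫ y', l (w.2, y') ∂Py) ∂P :=
    integral_congr_ae (ae_of_all _ fun w => by simp only [hKx, hLy])
  rw [hKxx, hLyy, hfinal3]
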